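/- arXiv:0910.4645 — 2 statements merged into one kernel-verified Lean document; each statement's English description precedes it below -/
import Mathlib

section
/- Let d be a positive integer and let n = 3d + 2. Then there exists a partition of the family of all subsets of [n] of cardinality at least d into intervals [A,B] such that |B| ≥ d+2 for every interval in the partition. -/
namespace PartC3

/-- `N d = 3d+2`. -/
abbrev N (d : ℕ) : ℕ := 3*d+2

def res (d : ℕ) (p : ℕ) : Fin (N d) := ⟨p % (N d), Nat.mod_lt _ (by show 0 < 3*d+2; omega)⟩

def w (d : ℕ) (S : Finset (Fin (N d))) (p : ℕ) : ℤ := if res d p ∈ S then -2 else 1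

def W (d : ℕ) (S : Finset (Fin (N d))) (q L : ℕ) : ℤ :=
  ∑ j ∈ Finset.range L, w d S (q+j)

def F (d : ℕ) (S : Finset (Fin (N d))) (t : ℕ) : ℤ :=
  ∑ j ∈ Finset.range t, w d S j

lemma res_val_lt (d p : ℕ) : (res d p).val = p % (N d) := rfl

lemma res_eq_iff {d p q : ℕ} : res d p = res d q ↔ p % (N d) = q % (N d) := by
  constructor
  · intro h; exact congrArg Fin.val h
  · intro h; exact Fin.ext h

lemma res_add_N (d p : ℕ) : res d (p + N d) = res d p := by
  apply Fin.ext; simp [res, Nat.add_mod_right]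

lemma res_of_lt {d p : ℕ} (h : p < N d) : (res d p).val = p := Nat.mod_eq_of_lt h

lemma res_fin (d : ℕ) (x : Fin (N d)) : res d x.val = x := Fin.ext (Nat.mod_eq_of_lt x.isLt)

/-- two numbers in a window of length N with equal residues are equal -/
lemma res_inj_window {d p q : ℕ} (h1 : p ≤ q) (h2 : q < p + N d)
    (h : res d p = res d q) : p = q := by
  rw [res_eq_iff] at h
  have hd : (N d) ∣ (q - p) := (Nat.modEq_iff_dvd' h1).mp h
  rcases Nat.eq_zero_or_pos (q - p) with h0 | h0
  · omega
  · have := Nat.le_of_dvd h0 hd; omega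
variable {d : ℕ} {S : Finset (Fin (N d))}

lemma w_le_one (p : ℕ) : w d S p ≤ 1 := by
  unfold w; split <;> omega

lemma w_of_mem {p : ℕ} (h : res d p ∈ S) : w d S p = -2 := if_pos h
lemma w_of_notMem {p : ℕ} (h : res d p ∉ S) : w d S p = 1 := if_neg h

lemma w_period (p : ℕ) : w d S (p + N d) = w d S p := by
  unfold w; rw [res_add_N]

lemma W_zero (q : ℕ) : W d S q 0 = 0 := rfl

lemma W_succ (q L : ℕ) : W d S q (L+1) = W d S q L + w d S (q+L) :=
  Finset.sum_range_succ _ _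

lemma W_one (q : ℕ) : W d S q 1 = w d S q := by
  rw [show (1:ℕ) = 0+1 from rfl, W_succ, W_zero]; simp

lemma W_split (q L1 L2 : ℕ) : W d S q (L1 + L2) = W d S q L1 + W d S (q + L1) L2 := by
  induction L2 with
  | zero => simp [W_zero]
  | succ m ih =>
      rw [show L1 + (m+1) = (L1+m)+1 from rfl, W_succ, ih, W_succ, Nat.add_assoc]
      ring

lemma W_cons (q L : ℕ) : W d S q (L+1) = w d S q + W d S (q+1) L := by
  rw [show L + 1 = 1 + L by ring, W_split, W_one]

lemma W_period (q L : ℕ) : W d S (q + N d) L = W d S q L := by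
  unfold W
  apply Finset.sum_congr rfl
  intro j _
  rw [show q + N d + j = (q + j) + N d by ring, w_period]

lemma F_window (q L : ℕ) : F d S (q + L) = F d S q + W d S q L := by
  induction L with
  | zero => simp [W_zero]
  | succ m ih => rw [show q + (m+1) = (q+m)+1 from rfl, W_succ,
      show F d S ((q+m)+1) = F d S (q+m) + w d S (q+m) from Finset.sum_range_succ _ _, ih]; ring

lemma W_full (q : ℕ) : W d S q (N d) = (N d : ℤ) - 3 * S.card := by
  induction q with
  | zero =>
      have h1 : W d S 0 (N d) = ∑ j ∈ Finset.range (N d), w d S j := by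
        unfold W; apply Finset.sum_congr rfl; intro j _; rw [Nat.zero_add]
      rw [h1, ← Fin.sum_univ_eq_sum_range (fun j => w d S j) (N d)]
      have h2 : ∀ x : Fin (N d), w d S x.val = 1 + (if x ∈ S then (-3:ℤ) else 0) := by
        intro x; unfold w; rw [res_fin]; split <;> ring
      rw [Finset.sum_congr rfl (fun x _ => h2 x)]
      rw [Finset.sum_add_distrib, Finset.sum_const, Finset.sum_ite_mem,
        Finset.univ_inter, Finset.sum_const, Finset.card_univ]
      simp; ring
  | succ q ih =>
      have h1 : W d S q (N d + 1) = W d S q (N d) + w d S (q + N d) := W_succ _ _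
      have h2 : W d S q (1 + N d) = w d S q + W d S (q+1) (N d) := by
        rw [W_split, W_one]
      rw [show N d + 1 = 1 + N d by ring] at h1
      rw [h1] at h2
      rw [w_period] at h2
      omega

lemma F_period (t : ℕ) : F d S (t + N d) = F d S t + ((N d : ℤ) - 3 * S.card) := by
  rw [F_window, W_full]
lemma N_pos (d : ℕ) : 0 < N d := by show 0 < 3*d+2; omega

/-- `q` is a good starting position for `S`. -/
def Good (d : ℕ) (S : Finset (Fin (N d))) (q : ℕ) : Prop :=
  ∀ L ∈ Finset.Icc 1 (N d), 0 < W d S q L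

instance goodDec (d : ℕ) (S : Finset (Fin (N d))) : DecidablePred (Good d S) := fun q =>
  inferInstanceAs (Decidable (∀ L ∈ Finset.Icc 1 (N d), 0 < W d S q L))

def GA (d : ℕ) (S : Finset (Fin (N d))) : Finset (Fin (N d)) :=
  Finset.univ.filter (fun x => Good d S x.val)

lemma good_def {q : ℕ} : Good d S q ↔ ∀ L, 1 ≤ L → L ≤ N d → 0 < W d S q L := by
  unfold Good
  constructor
  · intro h L h1 h2; exact h L (Finset.mem_Icc.mpr ⟨h1, h2⟩)
  · intro h L hL; obtain ⟨h1, h2⟩ := Finset.mem_Icc.mp hL; exact h L h1 h2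

lemma mem_GA {x : Fin (N d)} : x ∈ GA d S ↔ Good d S x.val := by
  unfold GA
  rw [Finset.mem_filter]
  simp

lemma good_iff_F {q : ℕ} :
    Good d S q ↔ ∀ t, q < t → t ≤ q + N d → F d S q < F d S t := by
  rw [good_def]
  constructor
  · intro h t h1 h2
    have h3 : t = q + (t - q) := by omega
    rw [h3, F_window]
    have := h (t-q) (by omega) (by omega)
    omega
  · intro h L h1 h2
    have := h (q+L) (by omega) (by omega)
    rw [F_window] at this
    omega

lemma good_period {q : ℕ} : Good d S (q + N d) ↔ Good d S q := by
  rw [good_def, good_def]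
  constructor
  · intro h L h1 h2; have := h L h1 h2; rwa [W_period] at this
  · intro h L h1 h2; rw [W_period]; exact h L h1 h2

lemma good_not_mem {q : ℕ} (h : Good d S q) : res d q ∉ S := by
  rw [good_def] at h
  intro hm
  have := h 1 le_rfl (by have := N_pos d; omega)
  rw [W_one, w_of_mem hm] at this
  omega

section L1
variable (hS : (S.card : ℤ) = d)

include hS in
lemma F_period2 (t : ℕ) : F d S (t + N d) = F d S t + 2 := by
  rw [F_period, hS]
  have : ((N d : ℕ) : ℤ) = 3 * d + 2 := by push_cast [N]; ring
  rw [this]; ring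

include hS in
lemma at_most_two {q1 q2 q3 : ℕ} (h1 : Good d S q1) (h2 : Good d S q2) (h3 : Good d S q3)
    (o1 : q1 < q2) (o2 : q2 < q3) (o3 : q3 < q1 + N d) : False := by
  rw [good_iff_F] at h1 h2 h3
  have e1 : F d S q1 < F d S q2 := h1 q2 o1 (by omega)
  have e2 : F d S q2 < F d S q3 := h2 q3 o2 (by omega)
  have e5 : F d S q3 < F d S (q1 + N d) := h3 (q1 + N d) o3 (by omega)
  rw [F_period2 hS] at e5
  omega

include hS in
lemma exists_two_goods : ∃ g1 g2 : Fin (N d), g1 ≠ g2 ∧ Good d S g1.val ∧ Good d S g2.val := by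
  classical
  have hNpos := N_pos d
  have hne : (Finset.range (N d)).Nonempty := ⟨0, Finset.mem_range.mpr hNpos⟩
  have hine : ((Finset.range (N d)).image (F d S)).Nonempty := hne.image _
  set m := ((Finset.range (N d)).image (F d S)).min' hine with hm
  have hmle : ∀ t, t < N d → m ≤ F d S t := by
    intro t ht
    exact Finset.min'_le _ _ (Finset.mem_image_of_mem _ (Finset.mem_range.mpr ht))
  have hachne : ((Finset.range (N d)).filter (fun t => F d S t = m)).Nonempty := by
    have h1 := Finset.min'_mem _ hine
    rw [Finset.mem_image] at h1
    obtain ⟨t, ht, he⟩ := h1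
    exact ⟨t, Finset.mem_filter.mpr ⟨ht, he⟩⟩
  have hq1mem := Finset.mem_filter.mp (Finset.max'_mem _ hachne)
  set q1 := ((Finset.range (N d)).filter (fun t => F d S t = m)).max' hachne with hq1def
  obtain ⟨hq1r, hFq1⟩ := hq1mem
  rw [Finset.mem_range] at hq1r
  have hlast : ∀ t, q1 < t → t < N d → m < F d S t := by
    intro t h1t h2t
    rcases lt_or_eq_of_le (hmle t h2t) with h | h
    · exact h
    · exfalso
      have hmem : t ∈ (Finset.range (N d)).filter (fun t => F d S t = m) :=
        Finset.mem_filter.mpr ⟨Finset.mem_range.mpr h2t, h.symm⟩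
      have := Finset.le_max' _ _ hmem
      omega
  have hwin : ∀ t, q1 < t → t ≤ q1 + N d → m + 1 ≤ F d S t := by
    intro t h1t h2t
    by_cases hc : t < N d
    · exact hlast t h1t hc
    · have h4 : F d S t = F d S (t - N d) + 2 := by
        have := F_period2 hS (t - N d)
        rw [show t - N d + N d = t by omega] at this
        omega
      have := hmle (t - N d) (by omega)
      omega
  have hgood1 : Good d S q1 := by
    rw [good_iff_F]
    intro t h1t h2t
    have := hwin t h1t h2t
    omega
  -- second good point
  have hTne : ((Finset.Icc (q1+1) (q1 + N d)).filter (fun t => F d S t ≤ m + 1)).Nonempty := by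
    refine ⟨q1 + 1, Finset.mem_filter.mpr ⟨Finset.mem_Icc.mpr ⟨le_rfl, by omega⟩, ?_⟩⟩
    have h1 : F d S (q1 + 1) = F d S q1 + w d S q1 := Finset.sum_range_succ _ _
    have := w_le_one (d := d) (S := S) q1
    omega
  have hq2mem := Finset.mem_filter.mp (Finset.max'_mem _ hTne)
  set q2 := ((Finset.Icc (q1+1) (q1 + N d)).filter (fun t => F d S t ≤ m + 1)).max' hTne
    with hq2def
  obtain ⟨hq2r, hq2c⟩ := hq2mem
  rw [Finset.mem_Icc] at hq2r
  obtain ⟨hq2a, hq2b⟩ := hq2r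
  have hFq2 : F d S q2 = m + 1 := by
    have := hwin q2 (by omega) hq2b
    omega
  have hq2last : ∀ t, q2 < t → t ≤ q1 + N d → m + 2 ≤ F d S t := by
    intro t h1t h2t
    have h3 := hwin t (by omega) h2t
    rcases lt_or_eq_of_le h3 with h | h
    · omega
    · exfalso
      have hmem : t ∈ (Finset.Icc (q1+1) (q1 + N d)).filter (fun t => F d S t ≤ m + 1) :=
        Finset.mem_filter.mpr ⟨Finset.mem_Icc.mpr ⟨by omega, h2t⟩, by omega⟩
      have := Finset.le_max' _ _ hmem
      omega
  have hq2ne : q2 ≠ q1 + N d := by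
    intro h
    have := F_period2 hS q1
    rw [← h] at this
    omega
  have hgood2 : Good d S q2 := by
    rw [good_iff_F]
    intro t h1t h2t
    by_cases hc : t ≤ q1 + N d
    · have := hq2last t h1t hc; omega
    · have h5 : F d S t = F d S (t - N d) + 2 := by
        have := F_period2 hS (t - N d)
        rw [show t - N d + N d = t by omega] at this
        omega
      have := hwin (t - N d) (by omega) (by omega)
      omega
  refine ⟨res d q1, res d q2, ?_, ?_, ?_⟩
  · intro h
    have : q1 = q2 ∨ q1 + N d = q2 := by
      rcases Nat.lt_or_ge q2 (N d) with hc | hc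
      · left; exact res_inj_window (by omega) (by omega) h
      · right
        have h2 : res d (q1 + N d) = res d q2 := by rw [res_add_N]; exact h
        have h3 := res_inj_window (d := d) (p := q2) (q := q1 + N d) (by omega) (by omega) h2.symm
        omega
    omega
  · rw [res_of_lt hq1r]; exact hgood1
  · rcases Nat.lt_or_ge q2 (N d) with hc | hc
    · rw [res_of_lt hc]; exact hgood2
    · have h2 : (res d q2).val = q2 - N d := by
        rw [res_val_lt]
        conv_lhs => rw [show q2 = (q2 - N d) + N d by omega]
        rw [Nat.add_mod_right, Nat.mod_eq_of_lt (by omega)]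
      rw [h2]
      rw [← good_period (q := q2 - N d), show q2 - N d + N d = q2 by omega]
      exact hgood2

include hS in
lemma GA_pair : ∃ g1 g2 : Fin (N d), g1 ≠ g2 ∧ GA d S = {g1, g2} := by
  obtain ⟨g1, g2, hne, h1, h2⟩ := exists_two_goods hS
  refine ⟨g1, g2, hne, ?_⟩
  apply Finset.ext
  intro x
  rw [mem_GA, Finset.mem_insert, Finset.mem_singleton]
  constructor
  · intro hx
    by_contra hcon
    push_neg at hcon
    obtain ⟨hx1, hx2⟩ := hcon
    have hv1 : x.val ≠ g1.val := fun h => hx1 (Fin.ext h)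
    have hv2 : x.val ≠ g2.val := fun h => hx2 (Fin.ext h)
    have hv3 : g1.val ≠ g2.val := fun h => hne (Fin.ext h)
    have hb : ∀ a b c : ℕ, a < b → b < c → c < N d →
        Good d S a → Good d S b → Good d S c → False := by
      intro a b c o1 o2 o3 ha hbb hc
      exact at_most_two hS ha hbb hc o1 o2 (by omega)
    have l1 := x.isLt; have l2 := g1.isLt; have l3 := g2.isLt
    obtain ⟨a, b, c, hab, hbc, hcN, ga, gb, gc⟩ :
        ∃ a b c : ℕ, a < b ∧ b < c ∧ c < N d ∧ Good d S a ∧ Good d S b ∧ Good d S c := by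
      rcases Nat.lt_trichotomy x.val g1.val with o | o | o
      · rcases Nat.lt_trichotomy g1.val g2.val with p | p | p
        · exact ⟨_, _, _, o, p, l3, hx, h1, h2⟩
        · exact absurd p hv3
        · rcases Nat.lt_trichotomy x.val g2.val with r | r | r
          · exact ⟨_, _, _, r, p, l2, hx, h2, h1⟩
          · exact absurd r hv2
          · exact ⟨_, _, _, r, o, l2, h2, hx, h1⟩
      · exact absurd o hv1
      · rcases Nat.lt_trichotomy x.val g2.val with q | q | q
        · exact ⟨_, _, _, o, q, l3, h1, hx, h2⟩
        · exact absurd q hv2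
        · rcases Nat.lt_trichotomy g1.val g2.val with s | s | s
          · exact ⟨_, _, _, s, q, l1, h1, h2, hx⟩
          · exact absurd s hv3
          · exact ⟨_, _, _, s, o, l1, h2, h1, hx⟩
    exact hb _ _ _ hab hbc hcN ga gb gc
  · intro hx
    rcases hx with h | h <;> subst h <;> assumption

end L1
section L2

lemma w_erase_eq {y : Fin (N d)} {p : ℕ} (h : res d p ≠ y) :
    w d (S.erase y) p = w d S p := by
  unfold w
  congr 1
  simp [Finset.mem_erase, h]

lemma W_erase {y : Fin (N d)} {q M : ℕ} (h : ∀ j, j < M → res d (q+j) ≠ y) :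
    W d (S.erase y) q M = W d S q M := by
  unfold W
  exact Finset.sum_congr rfl (fun j hj => w_erase_eq (h j (Finset.mem_range.mp hj)))

/-- the claimant predicate, phrased on the big set. -/
def Q (d : ℕ) (D : Finset (Fin (N d))) (q : ℕ) : Prop :=
  ∀ M, M < N d → 0 ≤ W d D (q+1) M

lemma Q_period {D : Finset (Fin (N d))} {q : ℕ} : Q d D (q + N d) ↔ Q d D q := by
  unfold Q
  constructor
  · intro h M hM
    have := h M hM
    rwa [show q + N d + 1 = (q+1) + N d by ring, W_period] at this
  · intro h M hM
    rw [show q + N d + 1 = (q+1) + N d by ring, W_period]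
    exact h M hM

lemma claim_iff {D : Finset (Fin (N d))} (y : Fin (N d)) :
    Good d (D.erase y) y.val ↔ Q d D y.val := by
  have hNpos := N_pos d
  have key : ∀ M, M < N d →
      W d (D.erase y) y.val (M+1) = 1 + W d D (y.val+1) M := by
    intro M hM
    rw [W_cons]
    have h1 : w d (D.erase y) y.val = 1 := by
      apply w_of_notMem
      rw [res_fin]
      exact Finset.notMem_erase _ _
    have h2 : W d (D.erase y) (y.val+1) M = W d D (y.val+1) M := by
      apply W_erase
      intro j hj hcon
      have h3 : res d (y.val + (1+j)) = res d y.val := by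
        rw [show y.val + 1 + j = y.val + (1+j) by ring] at hcon
        rw [hcon, res_fin]
      have := res_inj_window (d := d) (p := y.val) (q := y.val + (1+j))
        (by omega) (by omega) h3.symm
      omega
    rw [h1, h2]
  rw [good_def]
  constructor
  · intro h M hM
    have := h (M+1) (by omega) (by omega)
    rw [key M hM] at this
    omega
  · intro h L h1 h2
    have hM : L - 1 < N d := by omega
    have := h (L-1) hM
    have hk := key (L-1) hM
    rw [show L - 1 + 1 = L by omega] at hk
    omega

variable {D : Finset (Fin (N d))} (hD : (D.card : ℤ) = d + 1)

include hD in
lemma F_periodm1 (t : ℕ) : F d D (t + N d) = F d D t - 1 := by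
  rw [F_period, hD]
  have : ((N d : ℕ) : ℤ) = 3 * d + 2 := by push_cast [N]; ring
  rw [this]; ring

include hD in
lemma Q_unique_nat {a b : ℕ} (hab : a < b) (hbn : b < a + N d)
    (ha : Q d D a) (hb : Q d D b) : False := by
  have h1 := ha (b - a) (by omega)
  have h2 := hb (a + N d - b) (by omega)
  have e1 : W d D (a+1) (b-a) = F d D (b+1) - F d D (a+1) := by
    have := F_window (d := d) (S := D) (a+1) (b-a)
    rw [show a + 1 + (b - a) = b + 1 by omega] at this
    omega
  have e2 : W d D (b+1) (a + N d - b) = F d D ((a+1) + N d) - F d D (b+1) := by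
    have := F_window (d := d) (S := D) (b+1) (a + N d - b)
    rw [show b + 1 + (a + N d - b) = (a+1) + N d by omega] at this
    omega
  rw [F_periodm1 hD] at e2
  omega

include hD in
lemma claim_exists_unique :
    ∃! y : Fin (N d), y ∈ D ∧ Good d (D.erase y) y.val := by
  classical
  have hNpos := N_pos d
  have hN2 : 2 ≤ N d := by show 2 ≤ 3*d+2; omega
  -- first achiever of the minimum of F over [1, N]
  have hne : (Finset.Icc 1 (N d)).Nonempty := ⟨1, Finset.mem_Icc.mpr ⟨le_rfl, hNpos⟩⟩
  have hine : ((Finset.Icc 1 (N d)).image (F d D)).Nonempty := hne.image _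
  set m := ((Finset.Icc 1 (N d)).image (F d D)).min' hine with hm
  have hmle : ∀ t, 1 ≤ t → t ≤ N d → m ≤ F d D t := by
    intro t h1 h2
    exact Finset.min'_le _ _ (Finset.mem_image_of_mem _ (Finset.mem_Icc.mpr ⟨h1, h2⟩))
  have hachne : ((Finset.Icc 1 (N d)).filter (fun t => F d D t = m)).Nonempty := by
    have h1 := Finset.min'_mem _ hine
    rw [Finset.mem_image] at h1
    obtain ⟨t, ht, he⟩ := h1
    exact ⟨t, Finset.mem_filter.mpr ⟨ht, he⟩⟩
  have humem := Finset.mem_filter.mp (Finset.min'_mem _ hachne)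
  set u := ((Finset.Icc 1 (N d)).filter (fun t => F d D t = m)).min' hachne with hudef
  obtain ⟨hur, hFu⟩ := humem
  rw [Finset.mem_Icc] at hur
  have hfirst : ∀ t, 1 ≤ t → t < u → m < F d D t := by
    intro t h1 h2
    rcases lt_or_eq_of_le (hmle t h1 (by omega)) with h | h
    · exact h
    · exfalso
      have hmem : t ∈ (Finset.Icc 1 (N d)).filter (fun t => F d D t = m) :=
        Finset.mem_filter.mpr ⟨Finset.mem_Icc.mpr ⟨h1, by omega⟩, h.symm⟩
      have := Finset.min'_le _ _ hmem
      omega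
  have hQ : Q d D (u - 1) := by
    intro M hM
    rw [show u - 1 + 1 = u by omega]
    have e1 : W d D u M = F d D (u + M) - F d D u := by
      have := F_window (d := d) (S := D) u M; omega
    by_cases hc : u + M ≤ N d
    · have := hmle (u + M) (by omega) hc
      omega
    · have e2 : F d D (u + M) = F d D (u + M - N d) - 1 := by
        have := F_periodm1 hD (u + M - N d)
        rw [show u + M - N d + N d = u + M by omega] at this
        omega
      have := hfirst (u + M - N d) (by omega) (by omega)
      omega
  -- residue q0 := u - 1 is in D
  have hq0lt : u - 1 < N d := by omega
  have hmemD : res d (u-1) ∈ D := by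
    by_contra hcon
    have hQ2 : Q d D (u - 1 + N d - 1) := by
      intro M hM
      rw [show u - 1 + N d - 1 + 1 = (u - 1) + N d by omega, W_period]
      rcases Nat.eq_zero_or_pos M with h0 | h0
      · rw [h0, W_zero]
      · rw [show M = (M-1) + 1 by omega, W_cons]
        have h1 : w d D (u-1) = 1 := w_of_notMem hcon
        have h2 := hQ (M-1) (by omega)
        omega
    exact Q_unique_nat hD (a := u-1) (b := u - 1 + N d - 1) (by omega) (by omega) hQ hQ2
  refine ⟨res d (u-1), ⟨hmemD, ?_⟩, ?_⟩
  · rw [claim_iff, res_of_lt hq0lt]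
    exact hQ
  · intro y ⟨hyD, hyG⟩
    rw [claim_iff] at hyG
    apply Fin.ext
    rw [res_of_lt hq0lt]
    by_contra hcon
    rcases Nat.lt_trichotomy y.val (u-1) with h | h | h
    · exact Q_unique_nat hD h (by have := y.isLt; omega) hyG hQ
    · exact hcon h
    · exact Q_unique_nat hD h (by have := y.isLt; omega) hQ hyG

end L2
section L3

lemma res_inj_window2 {c p q : ℕ} (hp1 : c ≤ p) (hp2 : p < c + N d)
    (hq1 : c ≤ q) (hq2 : q < c + N d) (h : res d p = res d q) : p = q := by
  rcases le_total p q with hc | hc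
  · exact res_inj_window hc (by omega) h
  · exact (res_inj_window hc (by omega) h.symm).symm

lemma F_succ (t : ℕ) : F d S (t+1) = F d S t + w d S t := Finset.sum_range_succ _ _

lemma F_step_mem {t : ℕ} (h : res d t ∈ S) : F d S (t+1) = F d S t - 2 := by
  rw [F_succ, w_of_mem h]; ring

/-- valid pair predicate on the top set `E`. -/
def V (d : ℕ) (E : Finset (Fin (N d))) (a b : ℕ) : Prop :=
  a < b ∧ b < a + N d ∧ res d a ∈ E ∧ res d b ∈ E ∧
  F d E b = F d E a - 2 ∧
  (∀ t, a < t → t ≤ b → F d E a - 2 ≤ F d E t) ∧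
  (∀ t, b < t → t ≤ a + N d → F d E a - 4 ≤ F d E t)

variable {E : Finset (Fin (N d))}

lemma F_periodm4 (hEc : (E.card : ℤ) = d + 2) (t : ℕ) :
    F d E (t + N d) = F d E t - 4 := by
  rw [F_period, hEc]
  have : ((N d : ℕ) : ℤ) = 3 * d + 2 := by push_cast [N]; ring
  rw [this]; ring

lemma V_shift (hEc : (E.card : ℤ) = d + 2) {a b : ℕ} (h : V d E a b) :
    V d E (a + N d) (b + N d) := by
  obtain ⟨h1, h2, h3, h4, h5, h6, h7⟩ := h
  have hper := F_periodm4 hEc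
  refine ⟨by omega, by omega, by rwa [res_add_N], by rwa [res_add_N], ?_, ?_, ?_⟩
  · rw [hper a, hper b]; omega
  · intro t ht1 ht2
    have he : F d E t = F d E (t - N d) - 4 := by
      have := hper (t - N d); rw [show t - N d + N d = t by omega] at this; omega
    have := h6 (t - N d) (by omega) (by omega)
    rw [hper a]; omega
  · intro t ht1 ht2
    have he : F d E t = F d E (t - N d) - 4 := by
      have := hper (t - N d); rw [show t - N d + N d = t by omega] at this; omega
    have := h7 (t - N d) (by omega) (by omega)
    rw [hper a]; omega

lemma V_unshift (hEc : (E.card : ℤ) = d + 2) {a b : ℕ} (h : V d E (a + N d) (b + N d)) :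
    V d E a b := by
  obtain ⟨h1, h2, h3, h4, h5, h6, h7⟩ := h
  have hper := F_periodm4 hEc
  rw [hper a, hper b] at h5
  refine ⟨by omega, by omega, by rwa [res_add_N] at h3, by rwa [res_add_N] at h4, by omega, ?_, ?_⟩
  · intro t ht1 ht2
    have := h6 (t + N d) (by omega) (by omega)
    rw [hper t, hper a] at this; omega
  · intro t ht1 ht2
    have := h7 (t + N d) (by omega) (by omega)
    rw [hper t, hper a] at this; omega

lemma V_swap (hEc : (E.card : ℤ) = d + 2) {a b : ℕ} (h : V d E a b) :
    V d E b (a + N d) := by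
  obtain ⟨h1, h2, h3, h4, h5, h6, h7⟩ := h
  have hper := F_periodm4 hEc
  refine ⟨h2, by omega, h4, by rwa [res_add_N], ?_, ?_, ?_⟩
  · rw [hper a]; omega
  · intro t ht1 ht2
    have := h7 t ht1 ht2; omega
  · intro t ht1 ht2
    have he : F d E t = F d E (t - N d) - 4 := by
      have := hper (t - N d); rw [show t - N d + N d = t by omega] at this; omega
    have := h6 (t - N d) (by omega) (by omega)
    omega

variable {A : Finset (Fin (N d))} {α β : Fin (N d)}

lemma V_of_pair (hE : E = A ∪ {α, β}) (hab : α ≠ β)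
    (hnα : α ∉ A) (hnβ : β ∉ A) (hEc : (E.card : ℤ) = d + 2)
    {a b : ℕ} (hra : res d a = α) (hrb : res d b = β)
    (h1 : a < b) (h2 : b < a + N d)
    (hQa : ∀ L, 1 ≤ L → L ≤ N d → 0 < W d A a L)
    (hQb : ∀ L, 1 ≤ L → L ≤ N d → 0 < W d A b L) :
    V d E a b := by
  have hNpos := N_pos d
  have memE : ∀ x : Fin (N d), x ∈ E ↔ (x ∈ A ∨ x = α ∨ x = β) := by
    intro x
    rw [hE]
    constructor
    · intro h
      rcases Finset.mem_union.mp h with h | h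
      · exact Or.inl h
      · rcases Finset.mem_insert.mp h with h | h
        · exact Or.inr (Or.inl h)
        · exact Or.inr (Or.inr (Finset.mem_singleton.mp h))
    · intro h
      rcases h with h | h | h
      · exact Finset.mem_union_left _ h
      · rw [h]
        exact Finset.mem_union_right _ (Finset.mem_insert_self _ _)
      · rw [h]
        exact Finset.mem_union_right _ (Finset.mem_insert_of_mem (Finset.mem_singleton_self _))
  have hαE : α ∈ E := (memE α).mpr (Or.inr (Or.inl rfl))
  have hβE : β ∈ E := (memE β).mpr (Or.inr (Or.inr rfl))
  have wE_eq : ∀ p, res d p ≠ α → res d p ≠ β → w d E p = w d A p := by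
    intro p hp1 hp2
    by_cases hm : res d p ∈ A
    · rw [w_of_mem ((memE _).mpr (Or.inl hm)), w_of_mem hm]
    · rw [w_of_notMem, w_of_notMem hm]
      rw [memE]
      push_neg
      exact ⟨hm, hp1, hp2⟩
  have wE_ab : ∀ p, (res d p = α ∨ res d p = β) → w d E p = w d A p - 3 := by
    intro p hp
    have hmE : res d p ∈ E := by rcases hp with h | h <;> rw [h] <;> assumption
    have hmA : res d p ∉ A := by rcases hp with h | h <;> rw [h] <;> assumption
    rw [w_of_mem hmE, w_of_notMem hmA]; ring
  have Wsub : ∀ q L, 1 ≤ L → (res d q = α ∨ res d q = β) →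
      (∀ j, 1 ≤ j → j < L → res d (q+j) ≠ α ∧ res d (q+j) ≠ β) →
      W d E q L = W d A q L - 3 := by
    intro q L hL hq hsafe
    rw [show L = (L-1)+1 by omega, W_cons, W_cons]
    have hw1 := wE_ab q hq
    have hw2 : W d E (q+1) (L-1) = W d A (q+1) (L-1) := by
      unfold W
      apply Finset.sum_congr rfl
      intro j hj
      have hj' := Finset.mem_range.mp hj
      have hs := hsafe (1+j) (by omega) (by omega)
      rw [show q+1+j = q+(1+j) by ring]
      exact wE_eq _ hs.1 hs.2
    omega
  -- safety in the two windows
  have safety_a : ∀ j, 1 ≤ j → j < b - a → res d (a+j) ≠ α ∧ res d (a+j) ≠ β := by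
    intro j hj1 hj2
    constructor
    · intro hcon
      have : a = a + j := res_inj_window (d := d) (p := a) (q := a + j) (by omega) (by omega)
        (by rw [hra, hcon])
      omega
    · intro hcon
      have : a + j = b := res_inj_window2 (d := d) (c := a) (p := a + j) (q := b)
        (by omega) (by omega) (by omega) (by omega) (by rw [hcon, hrb])
      omega
  have safety_b : ∀ j, 1 ≤ j → j < a + N d - b → res d (b+j) ≠ α ∧ res d (b+j) ≠ β := by
    intro j hj1 hj2
    constructor
    · intro hcon
      have hra' : res d (a + N d) = α := by rw [res_add_N, hra]
      have : b + j = a + N d := res_inj_window2 (d := d) (c := b) (p := b + j) (q := a + N d)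
        (by omega) (by omega) (by omega) (by omega) (by rw [hcon, hra'])
      omega
    · intro hcon
      have : b = b + j := res_inj_window (d := d) (p := b) (q := b + j) (by omega) (by omega)
        (by rw [hrb, hcon])
      omega
  set δ := b - a with hδ
  have hδ1 : 1 ≤ δ := by omega
  have hδ2 : δ < N d := by omega
  have key1 : W d E a δ = W d A a δ - 3 :=
    Wsub a δ hδ1 (Or.inl hra) safety_a
  have key2 : W d E b (a + N d - b) = W d A b (a + N d - b) - 3 :=
    Wsub b _ (by omega) (Or.inr hrb) safety_b
  have hsplit : W d E a (N d) = W d E a δ + W d E b (a + N d - b) := by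
    have := W_split (d := d) (S := E) a δ (a + N d - b)
    rw [show δ + (a + N d - b) = N d by omega, show a + δ = b by omega] at this
    exact this
  have hfull : W d E a (N d) = -4 := by
    rw [W_full, hEc]
    have : ((N d : ℕ) : ℤ) = 3 * d + 2 := by push_cast [N]; ring
    rw [this]; ring
  have hb1 := hQa δ hδ1 (by omega)
  have hb2 := hQb (a + N d - b) (by omega) (by omega)
  have e1 : W d E a δ = -2 := by omega
  have e2 : W d E b (a + N d - b) = -2 := by omega
  have hP3 : F d E b = F d E a - 2 := by
    have := F_window (d := d) (S := E) a δ
    rw [show a + δ = b by omega] at this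
    omega
  refine ⟨h1, h2, by rw [hra]; exact hαE, by rw [hrb]; exact hβE, hP3, ?_, ?_⟩
  · intro t ht1 ht2
    have hw : W d E a (t - a) = W d A a (t - a) - 3 := by
      apply Wsub a _ (by omega) (Or.inl hra)
      intro j hj1 hj2
      exact safety_a j hj1 (by omega)
    have hq := hQa (t - a) (by omega) (by omega)
    have := F_window (d := d) (S := E) a (t - a)
    rw [show a + (t - a) = t by omega] at this
    omega
  · intro t ht1 ht2
    have hw : W d E b (t - b) = W d A b (t - b) - 3 := by
      apply Wsub b _ (by omega) (Or.inr hrb)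
      intro j hj1 hj2
      exact safety_b j hj1 (by omega)
    have hq := hQb (t - b) (by omega) (by omega)
    have := F_window (d := d) (S := E) b (t - b)
    rw [show b + (t - b) = t by omega] at this
    omega

end L3
section L3b

variable {E A A1 A2 : Finset (Fin (N d))} {α β : Fin (N d)}

lemma GA_notMem {x : Fin (N d)} (h : x ∈ GA d S) : x ∉ S := by
  have hGx := mem_GA.mp h
  have := good_not_mem hGx
  rwa [res_fin] at this

lemma shared_contra {u y z : Fin (N d)}
    (hGA1 : GA d A1 = {u, y}) (hGA2 : GA d A2 = {u, z})
    (hE1 : E = A1 ∪ {u, y}) (hE2 : E = A2 ∪ {u, z})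
    (hEc : (E.card : ℤ) = d + 2)
    (huy : u ≠ y) (huz : u ≠ z) (hyz : y ≠ z) : False := by
  have huE : u ∈ E := by
    rw [hE1]; exact Finset.mem_union_right _ (Finset.mem_insert_self _ _)
  have hDcard : (((E.erase u).card : ℤ)) = d + 1 := by
    have h3 : E.card = (E.erase u).card + 1 := (Finset.card_erase_add_one huE).symm
    have : ((E.card : ℤ)) = ((E.erase u).card : ℤ) + 1 := by exact_mod_cast h3
    omega
  have hcl := claim_exists_unique (D := E.erase u) hDcard
  obtain ⟨y0, _, huniq⟩ := hcl
  have key : ∀ (B : Finset (Fin (N d))) (v : Fin (N d)), GA d B = {u, v} → u ≠ v →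
      E = B ∪ {u, v} → v = y0 := by
    intro B v hGAB huv hEB
    have hvGA : v ∈ GA d B := by rw [hGAB]; exact Finset.mem_insert_of_mem (Finset.mem_singleton_self _)
    have huGA : u ∈ GA d B := by rw [hGAB]; exact Finset.mem_insert_self _ _
    have hvnB : v ∉ B := GA_notMem hvGA
    have hunB : u ∉ B := GA_notMem huGA
    have hvE : v ∈ E := by
      rw [hEB]
      exact Finset.mem_union_right _ (Finset.mem_insert_of_mem (Finset.mem_singleton_self _))
    have hvD : v ∈ E.erase u := Finset.mem_erase.mpr ⟨fun h => huv h.symm, hvE⟩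
    have hBeq : (E.erase u).erase v = B := by
      apply Finset.ext
      intro x
      rw [Finset.mem_erase, Finset.mem_erase]
      constructor
      · rintro ⟨hxv, hxu, hxE⟩
        rw [hEB] at hxE
        rcases Finset.mem_union.mp hxE with h | h
        · exact h
        · exfalso
          rcases Finset.mem_insert.mp h with h | h
          · exact hxu h
          · exact hxv (Finset.mem_singleton.mp h)
      · intro hx
        refine ⟨fun h => hvnB (h ▸ hx), fun h => hunB (h ▸ hx), ?_⟩
        rw [hEB]; exact Finset.mem_union_left _ hx
    apply huniq
    refine ⟨hvD, ?_⟩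
    rw [hBeq]
    exact mem_GA.mp hvGA
  have hy := key A1 y hGA1 huy hE1
  have hz := key A2 z hGA2 huz hE2
  exact hyz (hy.trans hz.symm)

lemma disjoint_contra {a1 b1 a2 b2 : ℕ}
    (hEc : (E.card : ℤ) = d + 2)
    (hV1 : V d E a1 b1) (hV2 : V d E a2 b2)
    (ha1 : a1 < N d) (ha2 : a2 < N d)
    (hd1 : res d a2 ≠ res d a1) (hd2 : res d a2 ≠ res d b1)
    (hd3 : res d b2 ≠ res d a1) (hd4 : res d b2 ≠ res d b1) : False := by
  have hper := F_periodm4 hEc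
  obtain ⟨hV1a, hV1b, hV1m1, hV1m2, hV1P3, hV1P1, hV1P2⟩ := hV1
  -- normalize pair 2 into the window (a1, a1 + N d)
  obtain ⟨c1, c2, hc1, hc2, hc12, hVc, hrc1, hrc2⟩ :
      ∃ c1 c2, a1 < c1 ∧ c2 < a1 + N d ∧ c1 < c2 ∧ V d E c1 c2 ∧
        (res d c1 = res d a2 ∨ res d c1 = res d b2) ∧
        (res d c2 = res d a2 ∨ res d c2 = res d b2) := by
    have hV2a := hV2.1
    have hV2b := hV2.2.1
    rcases Nat.lt_trichotomy a1 a2 with h | h | h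
    · by_cases hb : b2 < a1 + N d
      · exact ⟨a2, b2, h, hb, hV2a, hV2, Or.inl rfl, Or.inr rfl⟩
      · have hne : b2 ≠ a1 + N d := by
          intro hq
          apply hd3
          rw [hq, res_add_N]
        have hsw := V_swap hEc hV2
        have hsw2 : V d E ((b2 - N d) + N d) (a2 + N d) := by
          rw [show b2 - N d + N d = b2 by omega]; exact hsw
        have hV' := V_unshift hEc hsw2
        refine ⟨b2 - N d, a2, by omega, by omega, by omega, hV', Or.inr ?_, Or.inl rfl⟩
        rw [← res_add_N d (b2 - N d), show b2 - N d + N d = b2 by omega]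
    · exact absurd (by rw [h]) hd1
    · rcases Nat.lt_trichotomy b2 a1 with hb | hb | hb
      · have hV' := V_shift hEc hV2
        exact ⟨a2 + N d, b2 + N d, by omega, by omega, by omega, hV',
          Or.inl (res_add_N d a2), Or.inr (res_add_N d b2)⟩
      · exact absurd (by rw [hb]) hd3
      · refine ⟨b2, a2 + N d, hb, by omega, hV2b, V_swap hEc hV2,
          Or.inr rfl, Or.inl (res_add_N d a2)⟩
  obtain ⟨hVca, hVcb, hVcm1, hVcm2, hVcP3, hVcP1, hVcP2⟩ := hVc
  -- distinctness of c1, c2 from b1 as naturals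
  have hcb1 : c1 ≠ b1 := by
    intro hq
    rcases hrc1 with h | h
    · exact hd2 (by rw [← h, hq])
    · exact hd4 (by rw [← h, hq])
  have hcb2 : c2 ≠ b1 := by
    intro hq
    rcases hrc2 with h | h
    · exact hd2 (by rw [← h, hq])
    · exact hd4 (by rw [← h, hq])
  -- steps out of members
  have hstep_c1 : F d E (c1 + 1) = F d E c1 - 2 := F_step_mem hVcm1
  have hstep_c2 : F d E (c2 + 1) = F d E c2 - 2 := F_step_mem hVcm2
  have hstep_b1 : F d E (b1 + 1) = F d E b1 - 2 := F_step_mem hV1m2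
  rcases Nat.lt_trichotomy c2 b1 with hA' | hA' | hA'
  · -- case (a) : a1 < c1 < c2 < b1
    have e1 := hV1P1 (c2+1) (by omega) (by omega)
    have e2 := hVcP2 (b1+1) (by omega) (by omega)
    omega
  · exact absurd hA' hcb2
  · rcases Nat.lt_trichotomy c1 b1 with hB' | hB' | hB'
    · -- case (b) : a1 < c1 < b1 < c2
      have e1 := hV1P1 (c1+1) (by omega) (by omega)
      have e2 := hVcP1 (b1+1) (by omega) (by omega)
      omega
    · exact absurd hB' hcb1
    · -- case (c) : a1 < b1 < c1 < c2
      have e1 := hV1P2 (c1+1) (by omega) (by omega)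
      have e2 := hV1P2 (c2+1) (by omega) (by omega)
      have hstep_a1N : F d E (a1 + N d + 1) = F d E (a1 + N d) - 2 := by
        apply F_step_mem
        rw [res_add_N]
        exact hV1m1
      have e3 := hVcP2 (a1 + N d + 1) (by omega) (by omega)
      have e4 := hper a1
      omega

/-- produce a `V`-pair from a good pair. -/
lemma pair_V (hA : (A.card : ℤ) = d) (hGA : GA d A = {α, β}) (hab : α ≠ β)
    (hE : E = A ∪ {α, β}) (hEc : (E.card : ℤ) = d + 2) :
    ∃ a b : ℕ, a < N d ∧ res d a = α ∧ res d b = β ∧ V d E a b := by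
  have hαG : Good d A α.val := mem_GA.mp (hGA ▸ Finset.mem_insert_self α {β})
  have hβG : Good d A β.val :=
    mem_GA.mp (hGA ▸ Finset.mem_insert_of_mem (Finset.mem_singleton_self β))
  have hnα : α ∉ A := by have := good_not_mem hαG; rwa [res_fin] at this
  have hnβ : β ∉ A := by have := good_not_mem hβG; rwa [res_fin] at this
  have hvne : α.val ≠ β.val := fun h => hab (Fin.ext h)
  have hQa : ∀ L, 1 ≤ L → L ≤ N d → 0 < W d A α.val L := good_def.mp hαG
  have hQb0 : ∀ L, 1 ≤ L → L ≤ N d → 0 < W d A β.val L := good_def.mp hβG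
  by_cases hc : α.val < β.val
  · refine ⟨α.val, β.val, α.isLt, res_fin d α, res_fin d β, ?_⟩
    exact V_of_pair hE hab hnα hnβ hEc (res_fin d α) (res_fin d β) hc
      (by have := β.isLt; omega) hQa hQb0
  · refine ⟨α.val, β.val + N d, α.isLt, res_fin d α, ?_, ?_⟩
    · rw [res_add_N]; exact res_fin d β
    · have hQb : ∀ L, 1 ≤ L → L ≤ N d → 0 < W d A (β.val + N d) L := by
        intro L h1 h2; rw [W_period]; exact hQb0 L h1 h2
      exact V_of_pair hE hab hnα hnβ hEc (res_fin d α)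
        (by rw [res_add_N]; exact res_fin d β)
        (by have := β.isLt; omega) (by have := α.isLt; omega) hQa hQb

lemma tops_inj (h1 : (A1.card : ℤ) = d) (h2 : (A2.card : ℤ) = d)
    (hU : A1 ∪ GA d A1 = A2 ∪ GA d A2) : A1 = A2 := by
  obtain ⟨α1, β1, hne1, hGA1⟩ := GA_pair h1
  obtain ⟨α2, β2, hne2, hGA2⟩ := GA_pair h2
  have hE1 : A1 ∪ GA d A1 = A1 ∪ {α1, β1} := by rw [hGA1]
  have hE2 : A1 ∪ GA d A1 = A2 ∪ {α2, β2} := by rw [hU, hGA2]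
  have hn1a : α1 ∉ A1 := GA_notMem (hGA1 ▸ Finset.mem_insert_self _ _)
  have hn1b : β1 ∉ A1 :=
    GA_notMem (hGA1 ▸ Finset.mem_insert_of_mem (Finset.mem_singleton_self _))
  have hn2a : α2 ∉ A2 := GA_notMem (hGA2 ▸ Finset.mem_insert_self _ _)
  have hn2b : β2 ∉ A2 :=
    GA_notMem (hGA2 ▸ Finset.mem_insert_of_mem (Finset.mem_singleton_self _))
  have hEc : (((A1 ∪ GA d A1).card : ℤ)) = d + 2 := by
    rw [hE1]
    have hdisj : Disjoint A1 ({α1, β1} : Finset (Fin (N d))) := by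
      rw [Finset.disjoint_insert_right, Finset.disjoint_singleton_right]
      exact ⟨hn1a, hn1b⟩
    rw [Finset.card_union_of_disjoint hdisj, Finset.card_pair hne1]
    push_cast
    omega
  by_cases hGG : GA d A1 = GA d A2
  · apply Finset.ext
    intro x
    constructor
    · intro hx
      have hxE : x ∈ A2 ∪ GA d A2 := by rw [← hU]; exact Finset.mem_union_left _ hx
      rcases Finset.mem_union.mp hxE with h | h
      · exact h
      · exact absurd hx (GA_notMem (hGG ▸ h))
    · intro hx
      have hxE : x ∈ A1 ∪ GA d A1 := by rw [hU]; exact Finset.mem_union_left _ hx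
      rcases Finset.mem_union.mp hxE with h | h
      · exact h
      · exact absurd hx (GA_notMem (hGG.symm ▸ h))
  · by_cases hs1 : α1 = α2
    · -- shared u = α1 = α2
      subst hs1
      exact (shared_contra hGA1 hGA2 hE1 hE2 hEc hne1 hne2
        (fun h => hGG (by rw [hGA1, hGA2, h]))).elim
    · by_cases hs2 : α1 = β2
      · subst hs2
        exact (shared_contra hGA1 (by rw [hGA2, Finset.pair_comm]) hE1
          (by rw [hE2, Finset.pair_comm]) hEc hne1 (fun h => hne2 (by rw [← h]))
          (fun h => hGG (by rw [hGA1, hGA2, h, Finset.pair_comm]))).elim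
      · by_cases hs3 : β1 = α2
        · subst hs3
          exact (shared_contra (d := d) (by rw [hGA1, Finset.pair_comm]) hGA2
            (by rw [hE1, Finset.pair_comm]) hE2 hEc (fun h => hne1 h.symm) hne2
            (fun h => hGG (by rw [hGA1, hGA2, h, Finset.pair_comm]))).elim
        · by_cases hs4 : β1 = β2
          · subst hs4
            exact (shared_contra (d := d) (by rw [hGA1, Finset.pair_comm])
              (by rw [hGA2, Finset.pair_comm])
              (by rw [hE1, Finset.pair_comm]) (by rw [hE2, Finset.pair_comm]) hEc
              (fun h => hne1 h.symm) (fun h => hne2 h.symm)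
              (fun h => hGG (by rw [hGA1, hGA2, h]))).elim
          · -- fully disjoint pairs
            obtain ⟨a1, b1, ha1lt, hra1, hrb1, hV1⟩ := pair_V h1 hGA1 hne1 hE1 hEc
            obtain ⟨a2, b2, ha2lt, hra2, hrb2, hV2⟩ := pair_V h2 hGA2 hne2 hE2 hEc
            exact (disjoint_contra hEc hV1 hV2 ha1lt ha2lt
              (by rw [hra1, hra2]; exact fun h => hs1 h.symm)
              (by rw [hrb1, hra2]; exact fun h => hs3 h.symm)
              (by rw [hra1, hrb2]; exact fun h => hs2 h.symm)
              (by rw [hrb1, hrb2]; exact fun h => hs4 h.symm)).elim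

end L3b
lemma card_AG (hA : A.card = d) : (A ∪ GA d A).card = d + 2 := by
  obtain ⟨g1, g2, hne, hGA⟩ := GA_pair (S := A) (by exact_mod_cast hA)
  have hn1 : g1 ∉ A := GA_notMem (hGA ▸ Finset.mem_insert_self _ _)
  have hn2 : g2 ∉ A := GA_notMem (hGA ▸ Finset.mem_insert_of_mem (Finset.mem_singleton_self _))
  rw [hGA]
  have hdisj : Disjoint A ({g1, g2} : Finset (Fin (N d))) := by
    rw [Finset.disjoint_insert_right, Finset.disjoint_singleton_right]
    exact ⟨hn1, hn2⟩
  rw [Finset.card_union_of_disjoint hdisj, Finset.card_pair hne, hA]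

end PartC3

open PartC3 in
/-- (Theorem for `c = 3`) Let `d` be a positive integer and `n = 3d + 2`.
Then the family of all subsets of `[n]` of cardinality at least `d` can be partitioned into
intervals `[A,B] = {C : A ⊆ C ⊆ B}` with `|B| ≥ d + 2` for every interval. -/
theorem partition_c_eq_three (d : ℕ) (hd : 0 < d) (n : ℕ) (hn : n = 3 * d + 2) :
    ∃ P : Set (Finset (Fin n) × Finset (Fin n)),
      (∀ p ∈ P, p.1 ⊆ p.2 ∧ d ≤ p.1.card ∧ d + 2 ≤ p.2.card) ∧
      (∀ C : Finset (Fin n), d ≤ C.card → ∃! p, p ∈ P ∧ p.1 ⊆ C ∧ C ⊆ p.2) := by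
  subst hn
  classical
  refine ⟨{ p | (∃ A : Finset (Fin (N d)), A.card = d ∧ p = (A, A ∪ GA d A)) ∨
      (d + 2 ≤ p.1.card ∧ p.2 = p.1 ∧
        ¬ ∃ A : Finset (Fin (N d)), A.card = d ∧ A ∪ GA d A = p.1) }, ?_, ?_⟩
  · rintro p hp
    rcases hp with ⟨A, hA, rfl⟩ | ⟨hc1, hc2, _⟩
    · exact ⟨Finset.subset_union_left, le_of_eq hA.symm, le_of_eq (card_AG hA).symm⟩
    · refine ⟨?_, by omega, ?_⟩
      · rw [hc2]
      · rw [hc2]; omega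
  · intro C hC
    by_cases h0 : C.card = d
    · -- bottom layer
      refine ⟨(C, C ∪ GA d C), ⟨Or.inl ⟨C, h0, rfl⟩, Finset.Subset.refl _,
        Finset.subset_union_left⟩, ?_⟩
      rintro ⟨q1, q2⟩ ⟨hqP, hq1, hq2⟩
      rcases hqP with ⟨A, hA, heq⟩ | ⟨hc1, _, _⟩
      · simp only [Prod.mk.injEq] at heq
        obtain ⟨rfl, rfl⟩ := heq
        have hq1C : q1 = C := Finset.eq_of_subset_of_card_le hq1 (by omega)
        rw [hq1C]
      · exfalso
        have := Finset.card_le_card hq1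
        omega
    · by_cases h1 : C.card = d + 1
      · -- middle layer
        obtain ⟨y, ⟨hyC, hyG⟩, huniq⟩ :=
          claim_exists_unique (D := C) (by exact_mod_cast h1)
        have hAcard : (C.erase y).card = d := by
          rw [Finset.card_erase_of_mem hyC, h1]
          omega
        refine ⟨(C.erase y, C.erase y ∪ GA d (C.erase y)),
          ⟨Or.inl ⟨C.erase y, hAcard, rfl⟩, Finset.erase_subset _ _, ?_⟩, ?_⟩
        · intro x hx
          by_cases hxy : x = y
          · subst hxy
            exact Finset.mem_union_right _ (mem_GA.mpr hyG)
          · exact Finset.mem_union_left _ (Finset.mem_erase.mpr ⟨hxy, hx⟩)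
        · rintro ⟨q1, q2⟩ ⟨hqP, hq1, hq2⟩
          rcases hqP with ⟨A, hA, heq⟩ | ⟨hc1, _, _⟩
          · simp only [Prod.mk.injEq] at heq
            obtain ⟨rfl, rfl⟩ := heq
            have hcd : (C \ q1).card = 1 := by
              rw [Finset.card_sdiff_of_subset hq1, hA, h1]
              omega
            obtain ⟨y', hy'⟩ := Finset.card_eq_one.mp hcd
            have hy'C : y' ∈ C := by
              have : y' ∈ C \ q1 := hy' ▸ Finset.mem_singleton_self _
              exact (Finset.mem_sdiff.mp this).1
            have hy'A : y' ∉ q1 := by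
              have : y' ∈ C \ q1 := hy' ▸ Finset.mem_singleton_self _
              exact (Finset.mem_sdiff.mp this).2
            have hAeq : q1 = C.erase y' := by
              apply Finset.ext
              intro x
              rw [Finset.mem_erase]
              constructor
              · intro hx
                exact ⟨fun h => hy'A (h ▸ hx), hq1 hx⟩
              · rintro ⟨hxy, hxC⟩
                by_contra hcon
                have : x ∈ C \ q1 := Finset.mem_sdiff.mpr ⟨hxC, hcon⟩
                rw [hy'] at this
                exact hxy (Finset.mem_singleton.mp this)
            have hy'G : y' ∈ GA d q1 := by
              rcases Finset.mem_union.mp (hq2 hy'C) with h | h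
              · exact absurd h hy'A
              · exact h
            have : y' = y := by
              apply huniq
              refine ⟨hy'C, ?_⟩
              rw [← hAeq]
              exact mem_GA.mp hy'G
            rw [hAeq, this]
          · exfalso
            have := Finset.card_le_card hq1
            omega
      · -- top layers
        have hC2 : d + 2 ≤ C.card := by omega
        by_cases h2 : ∃ A : Finset (Fin (N d)), A.card = d ∧ A ∪ GA d A = C
        · obtain ⟨A0, hA0, hE0⟩ := h2
          refine ⟨(A0, C), ⟨Or.inl ⟨A0, hA0, by rw [← hE0]⟩,
            hE0 ▸ Finset.subset_union_left, Finset.Subset.refl _⟩, ?_⟩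
          rintro ⟨q1, q2⟩ ⟨hqP, hq1, hq2⟩
          rcases hqP with ⟨A, hA, heq⟩ | ⟨hc1, hc2, hnex⟩
          · simp only [Prod.mk.injEq] at heq
            obtain ⟨rfl, rfl⟩ := heq
            have hCeq : C = q1 ∪ GA d q1 :=
              Finset.eq_of_subset_of_card_le hq2 (by rw [card_AG hA]; omega)
            have : q1 = A0 := tops_inj (by exact_mod_cast hA) (by exact_mod_cast hA0)
              (by rw [← hCeq, hE0])
            simp only [Prod.mk.injEq]
            exact ⟨this, by rw [← hCeq]⟩
          · exfalso
            apply hnex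
            have hq2' : C ⊆ q2 := hq2
            have hc2' : q2 = q1 := hc2
            have hq1C : q1 = C := Finset.Subset.antisymm hq1 (hc2' ▸ hq2')
            exact ⟨A0, hA0, by rw [hE0, hq1C]⟩
        · refine ⟨(C, C), ⟨Or.inr ⟨hC2, rfl, by simpa using h2⟩,
            Finset.Subset.refl _, Finset.Subset.refl _⟩, ?_⟩
          rintro ⟨q1, q2⟩ ⟨hqP, hq1, hq2⟩
          rcases hqP with ⟨A, hA, heq⟩ | ⟨hc1, hc2, hnex⟩
          · exfalso
            simp only [Prod.mk.injEq] at heq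
            obtain ⟨rfl, rfl⟩ := heq
            have hCeq : C = q1 ∪ GA d q1 :=
              Finset.eq_of_subset_of_card_le hq2 (by rw [card_AG hA]; omega)
            exact h2 ⟨q1, hA, hCeq.symm⟩
          · have hq2' : C ⊆ q2 := hq2
            have hc2' : q2 = q1 := hc2
            have hq1C : q1 = C := Finset.Subset.antisymm hq1 (hc2' ▸ hq2')
            simp only [Prod.mk.injEq]
            exact ⟨hq1C, hc2'.trans hq1C⟩
end

section
/- Let n, d, k be positive integers with d ≤ k ≤ n. Suppose the family of all subsets of [n] of cardinality at least d is partitioned into intervals [C₁,D₁], …, [C_r,D_r] with |D_i| ≥ k for all i. Then C(n,d)·(k−d) ≤ C(n,d+1), where C(n,j) denotes the binomial coefficient n choose j. -/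
/-- Let `n, d, k` be positive integers with `d ≤ k ≤ n`. If the family of
all subsets of `[n]` of cardinality at least `d` is partitioned into intervals
`[C₁,D₁], …, [C_r,D_r]` with `|Dᵢ| ≥ k` for all `i`, then `C(n,d)·(k−d) ≤ C(n,d+1)`. -/
theorem counting_bound (n d k r : ℕ) (hd : 0 < d) (hdk : d ≤ k) (hkn : k ≤ n)
    (C D : Fin r → Finset (Fin n))
    (hCD : ∀ i, C i ⊆ D i)
    (hC : ∀ i, d ≤ (C i).card)
    (hD : ∀ i, k ≤ (D i).card)
    (hpart : ∀ S : Finset (Fin n), d ≤ S.card → ∃! i, C i ⊆ S ∧ S ⊆ D i) :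
    n.choose d * (k - d) ≤ n.choose (d + 1) := by
  classical
  set A : Finset (Finset (Fin n)) := Finset.univ.powersetCard d with hA
  set B : Finset (Finset (Fin n)) := Finset.univ.powersetCard (d + 1) with hB
  -- the interval containing a d-set, and the attached (d+1)-sets
  set f : Finset (Fin n) → Finset (Finset (Fin n)) := fun S =>
    if h : S.card = d then
      ((D (hpart S h.ge).choose) \ S).image (fun x => insert x S) else ∅ with hf
  have hmem : ∀ S : Finset (Fin n), ∀ hS : S.card = d, ∀ T ∈ f S,
      S ⊆ T ∧ T ⊆ D (hpart S hS.ge).choose ∧ T.card = d + 1 := by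
    intro S hS T hT
    rw [hf] at hT
    simp only [dif_pos hS, Finset.mem_image] at hT
    obtain ⟨x, hx, rfl⟩ := hT
    rw [Finset.mem_sdiff] at hx
    have hsub : S ⊆ D (hpart S hS.ge).choose := ((hpart S hS.ge).choose_spec.1).2
    refine ⟨Finset.subset_insert _ _, Finset.insert_subset hx.1 hsub, ?_⟩
    rw [Finset.card_insert_of_notMem hx.2, hS]
  have hCeq : ∀ S : Finset (Fin n), ∀ hS : S.card = d, C (hpart S hS.ge).choose = S := by
    intro S hS
    refine Finset.eq_of_subset_of_card_le ((hpart S hS.ge).choose_spec.1).1 ?_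
    have := hC (hpart S hS.ge).choose; omega
  -- f S ⊆ B
  have hfB : ∀ S ∈ A, f S ⊆ B := by
    intro S hSA T hT
    rw [hA, Finset.mem_powersetCard_univ] at hSA
    rw [hB, Finset.mem_powersetCard_univ]
    exact (hmem S hSA T hT).2.2
  -- disjointness
  have hdisj : (A : Set (Finset (Fin n))).PairwiseDisjoint f := by
    intro S hSA S' hS'A hne
    simp only [Finset.coe_mem, hA, Finset.mem_coe, Finset.mem_powersetCard_univ] at hSA hS'A
    refine Finset.disjoint_left.mpr fun {T} hT hT' => ?_
    obtain ⟨h1, h2, h3⟩ := hmem S hSA T hT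
    obtain ⟨h1', h2', h3'⟩ := hmem S' hS'A T hT'
    have hTd : d ≤ T.card := by omega
    have e1 : (hpart S hSA.ge).choose = (hpart T hTd).choose := by
      refine ((hpart T hTd).choose_spec.2 _ ⟨?_, h2⟩)
      rw [hCeq S hSA]; exact h1
    have e2 : (hpart S' hS'A.ge).choose = (hpart T hTd).choose := by
      refine ((hpart T hTd).choose_spec.2 _ ⟨?_, h2'⟩)
      rw [hCeq S' hS'A]; exact h1'
    apply hne
    rw [← hCeq S hSA, ← hCeq S' hS'A, e1, e2]
  -- lower bound on card (f S)
  have hcard : ∀ S ∈ A, k - d ≤ (f S).card := by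
    intro S hSA
    rw [hA, Finset.mem_powersetCard_univ] at hSA
    rw [hf]
    simp only [dif_pos hSA]
    rw [Finset.card_image_of_injOn]
    · calc k - d ≤ (D (hpart S hSA.ge).choose).card - S.card := by
            have := hD (hpart S hSA.ge).choose; omega
        _ ≤ _ := Finset.le_card_sdiff _ _
    · intro x hx y hy hxy
      rw [Finset.mem_coe, Finset.mem_sdiff] at hx hy
      simp only [] at hxy
      have : x ∈ insert y S := hxy ▸ Finset.mem_insert_self x S
      rcases Finset.mem_insert.mp this with h | h
      · exact h
      · exact absurd h hx.2
  calc n.choose d * (k - d) = ∑ _S ∈ A, (k - d) := by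
        rw [Finset.sum_const, smul_eq_mul, hA, Finset.card_powersetCard,
          Finset.card_univ, Fintype.card_fin, mul_comm]
    _ ≤ ∑ S ∈ A, (f S).card := Finset.sum_le_sum hcard
    _ = (A.biUnion f).card := (Finset.card_biUnion (fun S hS S' hS' h => hdisj hS hS' h)).symm
    _ ≤ B.card := Finset.card_le_card (Finset.biUnion_subset.mpr hfB)
    _ = n.choose (d + 1) := by
        rw [hB, Finset.card_powersetCard, Finset.card_univ, Fintype.card_fin]
end
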